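/- In the abstract compactness-multiplier setting on L²(μ), assume additionally the basic estimate: there exists A > 0 with ‖u‖² ≤ A·(Q(u) + N(u)) for all u ∈ D. If f_j are multipliers and f_j → f uniformly (in sup norm), then f is a multiplier. (The set of compactness multipliers is closed under uniform limits.) -/

import Mathlib

open MeasureTheory Filter

lemma aux13 {X : Type*} [MeasurableSpace X] (μ : Measure X)
    (g u : X → ℂ) (c : ℝ) (hc : 0 ≤ c) (h : ∀ᵐ x ∂μ, ‖g x‖ ≤ c) :
    eLpNorm (fun x => g x * u x) 2 μ ≤ ENNReal.ofReal c * eLpNorm u 2 μ := by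
  have h1 : eLpNorm (fun x => g x * u x) 2 μ ≤ eLpNorm ((c : ℂ) • u) 2 μ := by
    apply eLpNorm_mono_ae
    filter_upwards [h] with x hx
    simp only [Pi.smul_apply, smul_eq_mul, norm_mul]
    have : ‖(c : ℂ)‖ = c := by simp [Complex.norm_real, abs_of_nonneg hc]
    rw [this]
    exact mul_le_mul_of_nonneg_right hx (norm_nonneg _)
  calc eLpNorm (fun x => g x * u x) 2 μ ≤ eLpNorm ((c : ℂ) • u) 2 μ := h1
    _ = ‖(c : ℂ)‖₊ * eLpNorm u 2 μ := eLpNorm_const_smul _ _ _ _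
    _ = ENNReal.ofReal c * eLpNorm u 2 μ := by
        congr 1
        rw [← enorm_eq_nnnorm, ← ofReal_norm]
        congr 1
        simp [Complex.norm_real, abs_of_nonneg hc]

theorem stmt13 {X : Type*} [MeasurableSpace X] (μ : Measure X)
    (D : Set (Lp ℂ 2 μ)) (Q N : Lp ℂ 2 μ → ℝ)
    (hQ : ∀ u, 0 ≤ Q u) (hN : ∀ u, 0 ≤ N u)
    (hbasic : ∃ A > (0 : ℝ), ∀ u ∈ D, (‖u‖ : ℝ) ^ 2 ≤ A * (Q u + N u))
    (f : ℕ → X → ℂ) (flim : X → ℂ)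
    (hf : ∀ j, Measurable (f j)) (hflim : Measurable flim)
    (hfb : ∀ j, ∃ M : ℝ, ∀ᵐ x ∂μ, ‖f j x‖ ≤ M) (hflimb : ∃ M : ℝ, ∀ᵐ x ∂μ, ‖flim x‖ ≤ M)
    (hmult : ∀ j, ∀ ε > (0 : ℝ), ∃ C > (0 : ℝ), ∀ u ∈ D,
      ((eLpNorm (fun x => f j x * u x) 2 μ).toReal) ^ 2 ≤ ε * Q u + C * N u)
    (hunif : TendstoUniformly f flim atTop) :
    ∀ ε > (0 : ℝ), ∃ C > (0 : ℝ), ∀ u ∈ D,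
      ((eLpNorm (fun x => flim x * u x) 2 μ).toReal) ^ 2 ≤ ε * Q u + C * N u := by
  intro ε hε
  obtain ⟨A, hA, hAle⟩ := hbasic
  set δ : ℝ := Real.sqrt (ε / (8 * A)) with hδdef
  have hδpos : 0 < δ := Real.sqrt_pos.mpr (by positivity)
  have hδsq : δ ^ 2 = ε / (8 * A) := Real.sq_sqrt (by positivity)
  -- pick j with uniform closeness
  have hU := Metric.tendstoUniformly_iff.mp hunif δ hδpos
  obtain ⟨j, hj⟩ := hU.exists
  have hjbound : ∀ᵐ x ∂μ, ‖flim x - f j x‖ ≤ δ := by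
    filter_upwards with x
    have := hj x
    rw [Complex.dist_eq] at this
    exact le_of_lt this
  obtain ⟨C, hC, hCle⟩ := hmult j (ε / 4) (by positivity)
  refine ⟨2 * (δ ^ 2 * A) + 2 * C, by positivity, ?_⟩
  intro u hu
  -- boundedness of f j
  obtain ⟨M, hM⟩ := hfb j
  have hM0 : ∀ᵐ x ∂μ, ‖f j x‖ ≤ max M 0 :=
    hM.mono fun x hx => le_trans hx (le_max_left _ _)
  have huae := Lp.aestronglyMeasurable u
  have hufin : eLpNorm (↑↑u : X → ℂ) 2 μ ≠ ⊤ := (Lp.eLpNorm_lt_top u).ne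
  -- triangle inequality
  have hsplit : (fun x => flim x * (u : X → ℂ) x)
      = (fun x => (flim x - f j x) * (u : X → ℂ) x) + (fun x => f j x * (u : X → ℂ) x) := by
    funext x; simp; ring
  have hm1 : AEStronglyMeasurable (fun x => (flim x - f j x) * (u : X → ℂ) x) μ :=
    (((hflim.sub (hf j)).aestronglyMeasurable).mul huae)
  have hm2 : AEStronglyMeasurable (fun x => f j x * (u : X → ℂ) x) μ :=
    ((hf j).aestronglyMeasurable).mul huae
  have htri : eLpNorm (fun x => flim x * (u : X → ℂ) x) 2 μ
      ≤ eLpNorm (fun x => (flim x - f j x) * (u : X → ℂ) x) 2 μ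
        + eLpNorm (fun x => f j x * (u : X → ℂ) x) 2 μ := by
    rw [hsplit]
    exact eLpNorm_add_le hm1 hm2 (by norm_num)
  have hb : eLpNorm (fun x => (flim x - f j x) * (u : X → ℂ) x) 2 μ
      ≤ ENNReal.ofReal δ * eLpNorm (↑↑u : X → ℂ) 2 μ :=
    aux13 μ _ _ δ hδpos.le hjbound
  have hcbd : eLpNorm (fun x => f j x * (u : X → ℂ) x) 2 μ
      ≤ ENNReal.ofReal (max M 0) * eLpNorm (↑↑u : X → ℂ) 2 μ :=
    aux13 μ _ _ (max M 0) (le_max_right _ _) hM0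
  have hbfin : eLpNorm (fun x => (flim x - f j x) * (u : X → ℂ) x) 2 μ ≠ ⊤ :=
    (lt_of_le_of_lt hb (ENNReal.mul_lt_top ENNReal.ofReal_lt_top (Lp.eLpNorm_lt_top u))).ne
  have hcfin : eLpNorm (fun x => f j x * (u : X → ℂ) x) 2 μ ≠ ⊤ :=
    (lt_of_le_of_lt hcbd (ENNReal.mul_lt_top ENNReal.ofReal_lt_top (Lp.eLpNorm_lt_top u))).ne
  set a := (eLpNorm (fun x => flim x * (u : X → ℂ) x) 2 μ).toReal
  set b := (eLpNorm (fun x => (flim x - f j x) * (u : X → ℂ) x) 2 μ).toReal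
  set c := (eLpNorm (fun x => f j x * (u : X → ℂ) x) 2 μ).toReal
  have ha_le : a ≤ b + c := by
    rw [← ENNReal.toReal_add hbfin hcfin]
    exact ENNReal.toReal_mono (by simp [ENNReal.add_ne_top, hbfin, hcfin]) htri
  have hb0 : 0 ≤ b := ENNReal.toReal_nonneg
  have hc0 : 0 ≤ c := ENNReal.toReal_nonneg
  have ha0 : 0 ≤ a := ENNReal.toReal_nonneg
  have hbδ : b ≤ δ * ‖u‖ := by
    have := ENNReal.toReal_mono
      (ENNReal.mul_ne_top ENNReal.ofReal_lt_top.ne hufin) hb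
    rwa [ENNReal.toReal_mul, ENNReal.toReal_ofReal hδpos.le, ← Lp.norm_def] at this
  have hnorm2 : ‖u‖ ^ 2 ≤ A * (Q u + N u) := hAle u hu
  have hc2 : c ^ 2 ≤ (ε / 4) * Q u + C * N u := hCle u hu
  have key : a ^ 2 ≤ 2 * b ^ 2 + 2 * c ^ 2 := by
    nlinarith [mul_le_mul ha_le ha_le ha0 (by linarith : (0:ℝ) ≤ b + c), sq_nonneg (b - c)]
  have hb2 : b ^ 2 ≤ δ ^ 2 * (A * (Q u + N u)) := by
    have : b ^ 2 ≤ (δ * ‖u‖) ^ 2 := by nlinarith [norm_nonneg u]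
    calc b ^ 2 ≤ (δ * ‖u‖) ^ 2 := this
      _ = δ ^ 2 * ‖u‖ ^ 2 := by ring
      _ ≤ δ ^ 2 * (A * (Q u + N u)) := by nlinarith
  have hδA : δ ^ 2 * A = ε / 8 := by
    rw [hδsq]; field_simp
  nlinarith [hQ u, hN u]
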